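/- Let (X, μ) be a measure space, let φ, φ₁ : X → ℝ be measurable functions, and let p > 0 be a real number. If the function x ↦ exp(2φ₁(x) − 2(1 + 1/p)·φ(x)) is integrable with respect to μ, then the (nonnegative) function x ↦ exp(−2φ(x)) − exp(−2·max(φ(x), p·φ₁(x))) is integrable with respect to μ, and ∫_X (exp(−2φ) − exp(−2·max(φ, p·φ₁))) dμ ≤ ∫_X exp(2φ₁ − 2(1 + 1/p)·φ) dμ. -/
import Mathlib


open MeasureTheory Real

theorem integrable_exp_max_estimate {X : Type*} [MeasurableSpace X] (μ : Measure X)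
    (φ φ₁ : X → ℝ) (hφ : Measurable φ) (hφ₁ : Measurable φ₁)
    (p : ℝ) (hp : 0 < p)
    (hint : Integrable (fun x => Real.exp (2 * φ₁ x - 2 * (1 + 1 / p) * φ x)) μ) :
    Integrable (fun x => Real.exp (-2 * φ x) - Real.exp (-2 * max (φ x) (p * φ₁ x))) μ ∧
      ∫ x, (Real.exp (-2 * φ x) - Real.exp (-2 * max (φ x) (p * φ₁ x))) ∂μ ≤
        ∫ x, Real.exp (2 * φ₁ x - 2 * (1 + 1 / p) * φ x) ∂μ := by
  have hbound : ∀ x, Real.exp (-2 * φ x) - Real.exp (-2 * max (φ x) (p * φ₁ x)) ≤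
      Real.exp (2 * φ₁ x - 2 * (1 + 1 / p) * φ x) := by
    intro x
    rcases le_or_gt (p * φ₁ x) (φ x) with h | h
    · rw [max_eq_left h]
      simp [Real.exp_pos]
      positivity
    · rw [max_eq_right h.le]
      have h1 : Real.exp (-2 * φ x) ≤ Real.exp (2 * φ₁ x - 2 * (1 + 1 / p) * φ x) := by
        apply Real.exp_le_exp.mpr
        have : φ x / p ≤ φ₁ x := by
          rw [div_le_iff₀ hp]
          linarith [mul_comm p (φ₁ x)]
        have hd : φ x * p⁻¹ ≤ φ₁ x := by rw [mul_comm, ← div_eq_inv_mul]; exact this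
        ring_nf
        linarith
      have h2 : 0 < Real.exp (-2 * (p * φ₁ x)) := Real.exp_pos _
      linarith
  have hnn : ∀ x, 0 ≤ Real.exp (-2 * φ x) - Real.exp (-2 * max (φ x) (p * φ₁ x)) := by
    intro x
    have : Real.exp (-2 * max (φ x) (p * φ₁ x)) ≤ Real.exp (-2 * φ x) := by
      apply Real.exp_le_exp.mpr
      have := le_max_left (φ x) (p * φ₁ x)
      linarith
    linarith
  have hmeas : AEStronglyMeasurable
      (fun x => Real.exp (-2 * φ x) - Real.exp (-2 * max (φ x) (p * φ₁ x))) μ := by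
    apply Measurable.aestronglyMeasurable
    exact ((Real.measurable_exp.comp (hφ.const_mul (-2))).sub
      (Real.measurable_exp.comp (((hφ.max (hφ₁.const_mul p)).const_mul (-2)))))
  have hInt : Integrable (fun x => Real.exp (-2 * φ x) - Real.exp (-2 * max (φ x) (p * φ₁ x))) μ := by
    apply hint.mono' hmeas
    filter_upwards with x
    rw [Real.norm_eq_abs, abs_of_nonneg (hnn x)]
    exact hbound x
  exact ⟨hInt, integral_mono hInt hint hbound⟩
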